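/- An abstract simplicial complex K is a flag complex if and only if for any three faces σ₁, σ₂, σ₃ of K such that all pairwise unions σ₁ ∪ σ₂, σ₁ ∪ σ₃, σ₂ ∪ σ₃ are faces of K, the union σ₁ ∪ σ₂ ∪ σ₃ is also a face of K. -/

import Mathlib

/-- An abstract simplicial complex on a vertex type `V`: a family of finite subsets of `V`
closed under taking subsets. -/
structure ASC (V : Type*) where
  faces : Set (Finset V)
  down_closed : ∀ ⦃σ τ : Finset V⦄, σ ∈ faces → τ ⊆ σ → τ ∈ faces

/-- A flag complex: every finite set of vertices all of whose two-element subsets are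
faces is itself a face. -/
def ASC.IsFlag {V : Type*} [DecidableEq V] (K : ASC V) : Prop :=
  ∀ σ : Finset V, (∀ x ∈ σ, ∀ y ∈ σ, ({x, y} : Finset V) ∈ K.faces) → σ ∈ K.faces

/-- A (nonempty) abstract simplicial complex `K` is a flag complex iff for
any three faces whose pairwise unions are faces, the union of all three is a face. -/
theorem stmt9 {V : Type*} [DecidableEq V] (K : ASC V)
    (hne : (∅ : Finset V) ∈ K.faces) :
    K.IsFlag ↔ ∀ σ₁ ∈ K.faces, ∀ σ₂ ∈ K.faces, ∀ σ₃ ∈ K.faces,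
      σ₁ ∪ σ₂ ∈ K.faces → σ₁ ∪ σ₃ ∈ K.faces → σ₂ ∪ σ₃ ∈ K.faces →
        σ₁ ∪ σ₂ ∪ σ₃ ∈ K.faces := by
  constructor
  · intro hflag σ₁ h₁ σ₂ h₂ σ₃ h₃ h₁₂ h₁₃ h₂₃
    apply hflag
    intro x hx y hy
    simp only [Finset.mem_union] at hx hy
    have pair : ∀ τ : Finset V, τ ∈ K.faces → x ∈ τ → y ∈ τ →
        ({x, y} : Finset V) ∈ K.faces := by
      intro τ hτ hxτ hyτ
      exact K.down_closed hτ (by intro z hz; simp at hz; rcases hz with rfl | rfl <;> assumption)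
    rcases hx with (hx | hx) | hx <;> rcases hy with (hy | hy) | hy
    · exact pair _ h₁ hx hy
    · exact pair _ h₁₂ (Finset.mem_union_left _ hx) (Finset.mem_union_right _ hy)
    · exact pair _ h₁₃ (Finset.mem_union_left _ hx) (Finset.mem_union_right _ hy)
    · exact pair _ h₁₂ (Finset.mem_union_right _ hx) (Finset.mem_union_left _ hy)
    · exact pair _ h₂ hx hy
    · exact pair _ h₂₃ (Finset.mem_union_left _ hx) (Finset.mem_union_right _ hy)
    · exact pair _ h₁₃ (Finset.mem_union_right _ hx) (Finset.mem_union_left _ hy)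
    · exact pair _ h₂₃ (Finset.mem_union_right _ hx) (Finset.mem_union_left _ hy)
    · exact pair _ h₃ hx hy
  · intro h σ hσ
    induction σ using Finset.strongInduction with
    | _ σ ih =>
      rcases σ.eq_empty_or_nonempty with rfl | ⟨x, hx⟩
      · exact hne
      · by_cases hy : ∃ y ∈ σ, y ≠ x
        · obtain ⟨y, hy, hyx⟩ := hy
          have hpair : ({x, y} : Finset V) ∈ K.faces := hσ x hx y hy
          have hxf : ({x} : Finset V) ∈ K.faces :=
            K.down_closed hpair (by simp)
          have hyf : ({y} : Finset V) ∈ K.faces :=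
            K.down_closed hpair (by simp)
          have hsx : σ \ {x} ∈ K.faces := by
            apply ih _ (Finset.sdiff_ssubset (by simpa using hx) (by simp))
            intro a ha b hb
            exact hσ a ((Finset.mem_sdiff.mp ha).1) b ((Finset.mem_sdiff.mp hb).1)
          have hsy : σ \ {y} ∈ K.faces := by
            apply ih _ (Finset.sdiff_ssubset (by simpa using hy) (by simp))
            intro a ha b hb
            exact hσ a ((Finset.mem_sdiff.mp ha).1) b ((Finset.mem_sdiff.mp hb).1)
          have hsxy : σ \ {x, y} ∈ K.faces :=
            K.down_closed hsx (by intro a ha; simp at ha ⊢; tauto)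
          have e1 : σ \ {x, y} ∪ {x} = σ \ {y} := by
            ext a; simp; constructor
            · rintro (rfl | ⟨h1, h2, h3⟩) <;> tauto
            · rintro ⟨h1, h2⟩
              by_cases hax : a = x <;> tauto
          have e2 : σ \ {x, y} ∪ {y} = σ \ {x} := by
            ext a; simp; constructor
            · rintro (rfl | ⟨h1, h2, h3⟩) <;> tauto
            · rintro ⟨h1, h2⟩
              by_cases hay : a = y <;> tauto
          have e3 : ({x} : Finset V) ∪ {y} = {x, y} := by
            ext a; simp
          have := h (σ \ {x, y}) hsxy {x} hxf {y} hyf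
            (by rw [e1]; exact hsy) (by rw [e2]; exact hsx) (by rw [e3]; exact hpair)
          have e4 : σ \ {x, y} ∪ {x} ∪ {y} = σ := by
            ext a
            by_cases hax : a = x <;> by_cases hay : a = y <;>
              simp [hax, hay, hx, hy]
          rwa [e4] at this
        · push_neg at hy
          have : σ ⊆ {x} := fun a ha => by simp [hy a ha]
          exact K.down_closed (K.down_closed (hσ x hx x hx) (by simp)) this
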